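/- Fix a > 0 and q ∈ (1,2). The function x ↦ −G_a(x, qx) is strictly decreasing on (0, 2π/q] and vanishes at x = 2π/q; in particular −G_a(π/2, qπ/2) > 0. -/

import Mathlib

open Real

noncomputable def Ga (a x y : ℝ) : ℝ :=
  (1 / (2 * π)) * Real.log
    (((1 + a ^ 2 / x ^ 2) / (1 + a ^ 2 / (x - y) ^ 2)) *
      ((1 + a ^ 2 / (2 * π - x) ^ 2) /
        (1 + a ^ 2 / (x - y + 2 * π * Real.sign (y - x)) ^ 2)))

noncomputable def gg (a t : ℝ) : ℝ := Real.log (t ^ 2 + a ^ 2) - Real.log (t ^ 2)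

lemma log_one_add_eq (a t : ℝ) (ha : 0 < a) (ht : t ≠ 0) :
    Real.log (1 + a ^ 2 / t ^ 2) = gg a t := by
  have ht2 : (0:ℝ) < t ^ 2 := by positivity
  have h2 : (0:ℝ) < t ^ 2 + a ^ 2 := by positivity
  rw [gg, ← Real.log_div h2.ne' ht2.ne']
  congr 1
  field_simp

lemma gg_hasDeriv (a t : ℝ) (ha : 0 < a) (ht : t ≠ 0) :
    HasDerivAt (gg a) (-(2 * a ^ 2 / (t * (t ^ 2 + a ^ 2)))) t := by
  have hpow : HasDerivAt (fun s : ℝ => s ^ 2) (2 * t) t := by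
    simpa using hasDerivAt_pow 2 t
  have h1 : HasDerivAt (fun s : ℝ => s ^ 2 + a ^ 2) (2 * t) t := hpow.add_const _
  have h2 : HasDerivAt (fun s : ℝ => Real.log (s ^ 2 + a ^ 2)) (2 * t / (t ^ 2 + a ^ 2)) t :=
    h1.log (by positivity)
  have h3 : HasDerivAt (fun s : ℝ => Real.log (s ^ 2)) (2 * t / t ^ 2) t :=
    hpow.log (pow_ne_zero 2 ht)
  have h : HasDerivAt (gg a) (2 * t / (t ^ 2 + a ^ 2) - 2 * t / t ^ 2) t := h2.sub h3
  convert h using 1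
  have ht2 : (0:ℝ) < t ^ 2 := by positivity
  have h4 : (0:ℝ) < t ^ 2 + a ^ 2 := by positivity
  field_simp
  ring

lemma neg_Ga_eq (a q x : ℝ) (ha : 0 < a) (hq1 : 1 < q) (hq2 : q < 2) (hx : 0 < x)
    (hx2 : x < 2 * π) :
    -Ga a x (q * x) = (1 / (2 * π)) *
      (gg a ((q - 1) * x) - gg a x + (gg a (2 * π - (q - 1) * x) - gg a (2 * π - x))) := by
  have hc0 : 0 < q - 1 := by linarith
  have hc1 : q - 1 < 1 := by linarith
  have hcx : 0 < (q - 1) * x := mul_pos hc0 hx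
  have hcxlt : (q - 1) * x < x := by nlinarith
  have hsign : Real.sign (q * x - x) = 1 := Real.sign_of_pos (by nlinarith)
  have h2x : 0 < 2 * π - x := by linarith
  have h2cx : 0 < 2 * π - (q - 1) * x := by linarith
  have e2 : x - q * x + 2 * π * Real.sign (q * x - x) = 2 * π - (q - 1) * x := by
    rw [hsign]; ring
  have e1 : (x - q * x) ^ 2 = ((q - 1) * x) ^ 2 := by ring
  have E1pos : (0:ℝ) < 1 + a ^ 2 / x ^ 2 := by positivity
  have E2pos : (0:ℝ) < 1 + a ^ 2 / ((q - 1) * x) ^ 2 := by positivity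
  have E3pos : (0:ℝ) < 1 + a ^ 2 / (2 * π - x) ^ 2 := by positivity
  have E4pos : (0:ℝ) < 1 + a ^ 2 / (2 * π - (q - 1) * x) ^ 2 := by positivity
  rw [Ga, e2, e1]
  rw [Real.log_mul (by positivity) (by positivity),
    Real.log_div E1pos.ne' E2pos.ne', Real.log_div E3pos.ne' E4pos.ne',
    log_one_add_eq a x ha hx.ne', log_one_add_eq a ((q - 1) * x) ha hcx.ne',
    log_one_add_eq a (2 * π - x) ha h2x.ne', log_one_add_eq a (2 * π - (q - 1) * x) ha h2cx.ne']
  ring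

theorem neg_Ga_strictAnti (a q : ℝ) (ha : 0 < a) (hq : q ∈ Set.Ioo 1 2) :
    StrictAntiOn (fun x => -Ga a x (q * x)) (Set.Ioc 0 (2 * π / q)) ∧
    -Ga a (2 * π / q) (q * (2 * π / q)) = 0 ∧
    0 < -Ga a (π / 2) (q * (π / 2)) := by
  obtain ⟨hq1, hq2⟩ := hq
  have hπ : 0 < π := Real.pi_pos
  have hq0 : 0 < q := by linarith
  have hc0 : 0 < q - 1 := by linarith
  have hc1 : q - 1 < 1 := by linarith
  set c : ℝ := q - 1 with hc
  -- the smooth model function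
  set F : ℝ → ℝ := fun x => (1 / (2 * π)) *
      (gg a (c * x) - gg a x + (gg a (2 * π - c * x) - gg a (2 * π - x))) with hF
  have hx0lt : 2 * π / q < 2 * π := by
    rw [div_lt_iff₀ hq0]; nlinarith
  have hx0pos : 0 < 2 * π / q := by positivity
  -- derivative of F at any x ∈ (0, 2π)
  set D : ℝ → ℝ := fun x => (1 / (2 * π)) *
        (-(2 * a ^ 2 / ((c * x) * ((c * x) ^ 2 + a ^ 2))) * c
          - -(2 * a ^ 2 / (x * (x ^ 2 + a ^ 2)))
        + (-(2 * a ^ 2 / ((2 * π - c * x) * ((2 * π - c * x) ^ 2 + a ^ 2))) * (-c)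
          - -(2 * a ^ 2 / ((2 * π - x) * ((2 * π - x) ^ 2 + a ^ 2))) * (-1))) with hD
  have hderiv : ∀ x : ℝ, 0 < x → x < 2 * π → HasDerivAt F (D x) x := by
    intro x hx hx2
    have hcx : 0 < c * x := mul_pos hc0 hx
    have hcxlt : c * x < x := by nlinarith
    have h2x : 0 < 2 * π - x := by linarith
    have h2cx : 0 < 2 * π - c * x := by linarith
    have hlin : HasDerivAt (fun x : ℝ => c * x) c x := by
      simpa using (hasDerivAt_id x).const_mul c
    have hlin2 : HasDerivAt (fun x : ℝ => 2 * π - c * x) (-c) x := hlin.const_sub (2 * π)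
    have hlin3 : HasDerivAt (fun x : ℝ => 2 * π - x) (-1) x := by
      simpa using (hasDerivAt_id x).const_sub (2 * π)
    have h1 : HasDerivAt (fun x : ℝ => gg a (c * x))
        (-(2 * a ^ 2 / ((c * x) * ((c * x) ^ 2 + a ^ 2))) * c) x := by
      have := (gg_hasDeriv a (c * x) ha hcx.ne').comp x hlin
      simpa [Function.comp_def] using this
    have h2 : HasDerivAt (fun x : ℝ => gg a x)
        (-(2 * a ^ 2 / (x * (x ^ 2 + a ^ 2)))) x := gg_hasDeriv a x ha hx.ne'
    have h3 : HasDerivAt (fun x : ℝ => gg a (2 * π - c * x))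
        (-(2 * a ^ 2 / ((2 * π - c * x) * ((2 * π - c * x) ^ 2 + a ^ 2))) * (-c)) x := by
      have := (gg_hasDeriv a (2 * π - c * x) ha h2cx.ne').comp x hlin2
      simpa [Function.comp_def] using this
    have h4 : HasDerivAt (fun x : ℝ => gg a (2 * π - x))
        (-(2 * a ^ 2 / ((2 * π - x) * ((2 * π - x) ^ 2 + a ^ 2))) * (-1)) x := by
      have := (gg_hasDeriv a (2 * π - x) ha h2x.ne').comp x hlin3
      simpa [Function.comp_def] using this
    exact ((h1.sub h2).add (h3.sub h4)).const_mul (1 / (2 * π))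
  -- the derivative is negative
  have hderiv_neg : ∀ x : ℝ, 0 < x → x < 2 * π → D x < 0 := by
    intro x hx hx2
    rw [hD]
    simp only
    have hcx : 0 < c * x := mul_pos hc0 hx
    have hcxlt : c * x < x := by nlinarith
    have h2x : 0 < 2 * π - x := by linarith
    have h2cx : 0 < 2 * π - c * x := by linarith
    have hA2 : (0:ℝ) < (c * x) ^ 2 + a ^ 2 := by positivity
    have hA1 : (0:ℝ) < x ^ 2 + a ^ 2 := by positivity
    have e1 : -(2 * a ^ 2 / ((c * x) * ((c * x) ^ 2 + a ^ 2))) * c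
        = -(2 * a ^ 2 / (x * ((c * x) ^ 2 + a ^ 2))) := by
      field_simp
    have hAlt : (c * x) ^ 2 < x ^ 2 := by nlinarith
    have I1 : 2 * a ^ 2 / (x * (x ^ 2 + a ^ 2)) < 2 * a ^ 2 / (x * ((c * x) ^ 2 + a ^ 2)) := by
      apply div_lt_div_of_pos_left (by positivity) (by positivity)
      nlinarith
    have huv : 2 * π - x < 2 * π - c * x := by linarith
    have hsq : (2 * π - x) ^ 2 + a ^ 2 < (2 * π - c * x) ^ 2 + a ^ 2 := by nlinarith
    have hB : (2 * π - x) * ((2 * π - x) ^ 2 + a ^ 2)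
        < (2 * π - c * x) * ((2 * π - c * x) ^ 2 + a ^ 2) :=
      mul_lt_mul'' huv hsq h2x.le (by positivity)
    have I2 : c * (2 * a ^ 2 / ((2 * π - c * x) * ((2 * π - c * x) ^ 2 + a ^ 2)))
        < 2 * a ^ 2 / ((2 * π - x) * ((2 * π - x) ^ 2 + a ^ 2)) := by
      have p2 : (0:ℝ) < (2 * π - c * x) * ((2 * π - c * x) ^ 2 + a ^ 2) := by positivity
      have p1 : (0:ℝ) < (2 * π - x) * ((2 * π - x) ^ 2 + a ^ 2) := by positivity
      calc c * (2 * a ^ 2 / ((2 * π - c * x) * ((2 * π - c * x) ^ 2 + a ^ 2)))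
          < 1 * (2 * a ^ 2 / ((2 * π - c * x) * ((2 * π - c * x) ^ 2 + a ^ 2))) := by
            apply mul_lt_mul_of_pos_right hc1 (by positivity)
        _ = 2 * a ^ 2 / ((2 * π - c * x) * ((2 * π - c * x) ^ 2 + a ^ 2)) := one_mul _
        _ < 2 * a ^ 2 / ((2 * π - x) * ((2 * π - x) ^ 2 + a ^ 2)) :=
            div_lt_div_of_pos_left (by positivity) p1 hB
    rw [e1]
    have e2 : -(2 * a ^ 2 / ((2 * π - c * x) * ((2 * π - c * x) ^ 2 + a ^ 2))) * (-c)
        = c * (2 * a ^ 2 / ((2 * π - c * x) * ((2 * π - c * x) ^ 2 + a ^ 2))) := by ring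
    have e3 : -(2 * a ^ 2 / ((2 * π - x) * ((2 * π - x) ^ 2 + a ^ 2))) * (-1 : ℝ)
        = 2 * a ^ 2 / ((2 * π - x) * ((2 * π - x) ^ 2 + a ^ 2)) := by ring
    rw [e2, e3]
    have hpos : (0:ℝ) < 1 / (2 * π) := by positivity
    apply mul_neg_of_pos_of_neg hpos
    linarith
  -- F is strictly antitone on the interval
  have hFanti : StrictAntiOn F (Set.Ioc 0 (2 * π / q)) := by
    apply strictAntiOn_of_deriv_neg (convex_Ioc _ _)
    · intro x hx
      exact ((hderiv x hx.1 (lt_of_le_of_lt hx.2 hx0lt)).continuousAt).continuousWithinAt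
    · intro x hx
      rw [interior_Ioc] at hx
      have h := hderiv x hx.1 (lt_trans hx.2 hx0lt)
      rw [h.deriv]
      exact hderiv_neg x hx.1 (lt_trans hx.2 hx0lt)
  have hEq : ∀ x ∈ Set.Ioc (0:ℝ) (2 * π / q), -Ga a x (q * x) = F x := by
    intro x hx
    exact neg_Ga_eq a q x ha hq1 hq2 hx.1 (lt_of_le_of_lt hx.2 hx0lt)
  have hanti : StrictAntiOn (fun x => -Ga a x (q * x)) (Set.Ioc 0 (2 * π / q)) := by
    intro x hx y hy hxy
    have := hFanti hx hy hxy
    simpa [hEq x hx, hEq y hy] using this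
  have hmem0 : (2 * π / q) ∈ Set.Ioc (0:ℝ) (2 * π / q) := ⟨hx0pos, le_refl _⟩
  have hzero : -Ga a (2 * π / q) (q * (2 * π / q)) = 0 := by
    rw [hEq _ hmem0, hF]
    have key : c * (2 * π / q) = 2 * π - 2 * π / q := by
      rw [hc]; field_simp
    have key2 : 2 * π - c * (2 * π / q) = 2 * π / q := by rw [key]; ring
    simp only [key, key2]
    ring
  refine ⟨hanti, hzero, ?_⟩
  have hmem1 : (π / 2) ∈ Set.Ioc (0:ℝ) (2 * π / q) := by
    constructor
    · positivity
    · rw [le_div_iff₀ hq0]; nlinarith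
  have := hanti hmem1 hmem0 (by rw [lt_div_iff₀ hq0]; nlinarith)
  simpa [hzero] using this
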